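/- Let B be an idempotent-complete additive category and Y₁, Y₂ objects with Hom(Y₁,Y₂) = 0 = Hom(Y₂,Y₁). If Y is a direct summand of Y₁ ⊕ Y₂, then Y decomposes as Y = Y₃ ⊕ Y₄ where Y₃ is a direct summand of Y₁ and Y₄ is a direct summand of Y₂. -/

import Mathlib

open CategoryTheory Limits

universe v u

/-- In an idempotent-complete additive category `B`, if `Hom(Y₁,Y₂) = 0 = Hom(Y₂,Y₁)` and
`Y` is a direct summand of `Y₁ ⊕ Y₂`, then `Y ≅ Y₃ ⊞ Y₄` where `Y₃` is a direct summand
of `Y₁` and `Y₄` is a direct summand of `Y₂`. -/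
theorem summand_of_orthogonal_biproduct
    {B : Type u} [Category.{v} B] [Preadditive B] [HasBinaryBiproducts B]
    [IsIdempotentComplete B]
    (Y₁ Y₂ : B) (h₁₂ : ∀ f : Y₁ ⟶ Y₂, f = 0) (h₂₁ : ∀ f : Y₂ ⟶ Y₁, f = 0)
    (Y : B) (u : Y ⟶ Y₁ ⊞ Y₂) (v : Y₁ ⊞ Y₂ ⟶ Y) (huv : u ≫ v = 𝟙 Y) :
    ∃ (Y₃ Y₄ : B) (_ : Y ≅ Y₃ ⊞ Y₄)
      (u₃ : Y₃ ⟶ Y₁) (v₃ : Y₁ ⟶ Y₃) (u₄ : Y₄ ⟶ Y₂) (v₄ : Y₂ ⟶ Y₄),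
      u₃ ≫ v₃ = 𝟙 Y₃ ∧ u₄ ≫ v₄ = 𝟙 Y₄ := by
  set a : Y ⟶ Y₁ := u ≫ biprod.fst with ha
  set A : Y₁ ⟶ Y := biprod.inl ≫ v with hA
  set b : Y ⟶ Y₂ := u ≫ biprod.snd with hb
  set Bb : Y₂ ⟶ Y := biprod.inr ≫ v with hBb
  have hAb : A ≫ b = 0 := h₁₂ _
  have hBa : Bb ≫ a = 0 := h₂₁ _
  have hsum : a ≫ A + b ≫ Bb = 𝟙 Y := by
    calc a ≫ A + b ≫ Bb
        = u ≫ (biprod.fst ≫ biprod.inl + biprod.snd ≫ biprod.inr) ≫ v := by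
          rw [ha, hA, hb, hBb]
          simp only [Preadditive.add_comp, Preadditive.comp_add, Category.assoc]
      _ = 𝟙 Y := by rw [biprod.total, Category.id_comp, huv]
  have hAA : A ≫ a ≫ A = A := by
    have h : A ≫ (a ≫ A + b ≫ Bb) = A := by rw [hsum, Category.comp_id]
    rw [Preadditive.comp_add, reassoc_of% hAb, zero_comp, add_zero] at h
    exact h
  have hBB : Bb ≫ b ≫ Bb = Bb := by
    have h : Bb ≫ (a ≫ A + b ≫ Bb) = Bb := by rw [hsum, Category.comp_id]
    rw [Preadditive.comp_add, reassoc_of% hBa, zero_comp, zero_add] at h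
    exact h
  set e₁ : Y ⟶ Y := a ≫ A with he₁
  set e₂ : Y ⟶ Y := b ≫ Bb with he₂
  have he₁e₁ : e₁ ≫ e₁ = e₁ := by
    rw [he₁]
    simp only [Category.assoc]; rw [← he₁, hAA, he₁]
  have he₂e₂ : e₂ ≫ e₂ = e₂ := by
    rw [he₂]
    simp only [Category.assoc]; rw [← he₂, hBB, he₂]
  have he₁e₂ : e₁ ≫ e₂ = 0 := by
    rw [he₁, he₂]
    simp only [Category.assoc, reassoc_of% hAb, zero_comp, comp_zero]
  have he₂e₁ : e₂ ≫ e₁ = 0 := by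
    rw [he₁, he₂]
    simp only [Category.assoc, reassoc_of% hBa, zero_comp, comp_zero]
  obtain ⟨Y₃, i₃, r₃, hir₃, hri₃⟩ := IsIdempotentComplete.idempotents_split Y e₁ he₁e₁
  obtain ⟨Y₄, i₄, r₄, hir₄, hri₄⟩ := IsIdempotentComplete.idempotents_split Y e₂ he₂e₂
  have hi₃e : i₃ ≫ e₁ = i₃ := by rw [← hri₃, ← Category.assoc, hir₃, Category.id_comp]
  have hi₄e : i₄ ≫ e₂ = i₄ := by rw [← hri₄, ← Category.assoc, hir₄, Category.id_comp]
  have her₃ : e₁ ≫ r₃ = r₃ := by rw [← hri₃, Category.assoc, hir₃, Category.comp_id]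
  have her₄ : e₂ ≫ r₄ = r₄ := by rw [← hri₄, Category.assoc, hir₄, Category.comp_id]
  have h34 : i₃ ≫ r₄ = 0 := by
    calc i₃ ≫ r₄ = (i₃ ≫ e₁) ≫ (e₂ ≫ r₄) := by rw [hi₃e, her₄]
      _ = i₃ ≫ (e₁ ≫ e₂) ≫ r₄ := by simp only [Category.assoc]
      _ = 0 := by rw [he₁e₂, zero_comp, comp_zero]
  have h43 : i₄ ≫ r₃ = 0 := by
    calc i₄ ≫ r₃ = (i₄ ≫ e₂) ≫ (e₁ ≫ r₃) := by rw [hi₄e, her₃]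
      _ = i₄ ≫ (e₂ ≫ e₁) ≫ r₃ := by simp only [Category.assoc]
      _ = 0 := by rw [he₂e₁, zero_comp, comp_zero]
  refine ⟨Y₃, Y₄,
    ⟨biprod.lift r₃ r₄, biprod.desc i₃ i₄, ?_, ?_⟩,
    i₃ ≫ a, A ≫ r₃, i₄ ≫ b, Bb ≫ r₄, ?_, ?_⟩
  · rw [biprod.lift_desc, hri₃, hri₄]; exact hsum
  · apply biprod.hom_ext'
    · apply biprod.hom_ext <;> simp [hir₃, h34]
    · apply biprod.hom_ext <;> simp [hir₄, h43]
  · calc (i₃ ≫ a) ≫ A ≫ r₃ = i₃ ≫ e₁ ≫ r₃ := by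
          rw [he₁]; simp only [Category.assoc]
      _ = 𝟙 Y₃ := by rw [her₃, hir₃]
  · calc (i₄ ≫ b) ≫ Bb ≫ r₄ = i₄ ≫ e₂ ≫ r₄ := by
          rw [he₂]; simp only [Category.assoc]
      _ = 𝟙 Y₄ := by rw [her₄, hir₄]
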